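/- arXiv:2104.01385 — 2 statements merged into one kernel-verified Lean document; each statement's English description precedes it below -/
import Mathlib

section
/- If f is ρ-Lipschitz in the sense that ‖f(x,u) − f(y,v)‖∞ ≤ ρ(‖x−y‖∞ + ‖u−v‖∞) for all x,y ∈ 𝒳 and u,v ∈ 𝒰, and the approximate predecessor P̂(Y) is any set satisfying Pre(Y ⊖ B_{ρ(ε+μ)}) ⊆ P̂(Y) ⊆ Pre(Y) for all compact Y, then the componentwise operator T̂(M,W)[i] = ⋃_j (P̂(W[j]) ∩ L⁻¹(m_{ij})) satisfies T^{ρ(ε+μ)}(M,W)[i] ⊆ T̂(M,W)[i] ⊆ T⁰(M,W)[i] for all i. -/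
open Set

/-- `Pre 𝒳 𝒰 f δ X` is the δ-perturbed predecessor of `X`. -/
def Pre {n m : ℕ} (𝒳 : Set (Fin n → ℝ)) (𝒰 : Set (Fin m → ℝ))
    (f : (Fin n → ℝ) → (Fin m → ℝ) → Fin n → ℝ) (δ : ℝ)
    (X : Set (Fin n → ℝ)) : Set (Fin n → ℝ) :=
  {x | x ∈ 𝒳 ∧ ∃ u ∈ 𝒰, ∀ d : Fin n → ℝ, ‖d‖ ≤ δ → f x u + d ∈ X}

/-- Pontryagin difference `A ⊖ B = {c | ∀ b ∈ B, c + b ∈ A}`. -/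
def pdiff {n : ℕ} (A B : Set (Fin n → ℝ)) : Set (Fin n → ℝ) :=
  {c | ∀ b ∈ B, c + b ∈ A}

/-- Closed ∞-norm ball of radius `r` centered at the origin. -/
def ballInf {n : ℕ} (r : ℝ) : Set (Fin n → ℝ) := {d | ‖d‖ ≤ r}

/-- The exact operator `T^δ`, with `M i j = L⁻¹(m_{ij})`. -/
def TOp {n m n₁ n₂ : ℕ} (𝒳 : Set (Fin n → ℝ)) (𝒰 : Set (Fin m → ℝ))
    (f : (Fin n → ℝ) → (Fin m → ℝ) → Fin n → ℝ) (δ : ℝ)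
    (M : Fin n₁ → Fin n₂ → Set (Fin n → ℝ)) (W : Fin n₂ → Set (Fin n → ℝ)) :
    Fin n₁ → Set (Fin n → ℝ) :=
  fun i => ⋃ j, Pre 𝒳 𝒰 f δ (W j) ∩ M i j

/-- The operator built from an approximate predecessor `P̂`. -/
def TOpApprox {n n₁ n₂ : ℕ} (Phat : Set (Fin n → ℝ) → Set (Fin n → ℝ))
    (M : Fin n₁ → Fin n₂ → Set (Fin n → ℝ)) (W : Fin n₂ → Set (Fin n → ℝ)) :
    Fin n₁ → Set (Fin n → ℝ) :=
  fun i => ⋃ j, Phat (W j) ∩ M i j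

/-- If `f` is ρ-Lipschitz and `P̂` is sandwiched as
`Pre(Y ⊖ B_{ρ(ε+μ)}) ⊆ P̂(Y) ⊆ Pre(Y)` for all compact `Y`, then
`T^{ρ(ε+μ)}(M,W)[i] ⊆ T̂(M,W)[i] ⊆ T⁰(M,W)[i]` for all `i`. -/
theorem TOpApprox_sandwich {n m n₁ n₂ : ℕ}
    (𝒳 : Set (Fin n → ℝ)) (𝒰 : Set (Fin m → ℝ))
    (h𝒳 : IsCompact 𝒳) (h𝒰 : IsCompact 𝒰)
    (f : (Fin n → ℝ) → (Fin m → ℝ) → Fin n → ℝ)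
    (ρ ε μ : ℝ) (hρ : 0 < ρ) (hε : 0 < ε) (hμ : 0 < μ)
    (hLip : ∀ x ∈ 𝒳, ∀ y ∈ 𝒳, ∀ u ∈ 𝒰, ∀ v ∈ 𝒰,
      ‖f x u - f y v‖ ≤ ρ * (‖x - y‖ + ‖u - v‖))
    (Phat : Set (Fin n → ℝ) → Set (Fin n → ℝ))
    (hPhat : ∀ Y : Set (Fin n → ℝ), IsCompact Y →
      Pre 𝒳 𝒰 f 0 (pdiff Y (ballInf (ρ * (ε + μ)))) ⊆ Phat Y ∧
      Phat Y ⊆ Pre 𝒳 𝒰 f 0 Y)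
    (M : Fin n₁ → Fin n₂ → Set (Fin n → ℝ))
    (W : Fin n₂ → Set (Fin n → ℝ)) (hW : ∀ j, IsCompact (W j)) :
    ∀ i, TOp 𝒳 𝒰 f (ρ * (ε + μ)) M W i ⊆ TOpApprox Phat M W i ∧
      TOpApprox Phat M W i ⊆ TOp 𝒳 𝒰 f 0 M W i := by
  intro i
  constructor
  · intro x hx
    simp only [TOp, TOpApprox, mem_iUnion] at hx ⊢
    obtain ⟨j, ⟨hX, u, hu, hd⟩, hM⟩ := hx
    refine ⟨j, (hPhat (W j) (hW j)).1 ⟨hX, u, hu, ?_⟩, hM⟩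
    intro d hd0 b hb
    have hd' : d = 0 := by
      have := norm_le_zero_iff.mp hd0
      exact this
    subst hd'
    simpa using hd b hb
  · intro x hx
    simp only [TOp, TOpApprox, mem_iUnion] at hx ⊢
    obtain ⟨j, hP, hM⟩ := hx
    exact ⟨j, (hPhat (W j) (hW j)).2 hP, hM⟩
end

section
/- Under-sampled predecessor inclusion: assume f is ρ-Lipschitz as above, and the sampled control set 𝒰_μ ⊆ 𝒰 is a μ-net of 𝒰 (every u ∈ 𝒰 is within μ in ∞-norm of some u' ∈ 𝒰_μ). Then for compact Y ⊆ 𝒳, Pre_{𝒰}(Y ⊖ B_{ρμ}) ⊆ Pre_{𝒰_μ}(Y), where Pre_S(X) = {x ∈ 𝒳 | ∃u ∈ S, f(x,u) ∈ X}. -/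
open Set

/-- Predecessor with control set `S`: `Pre_S(X) = {x ∈ 𝒳 | ∃ u ∈ S, f x u ∈ X}`. -/
def PreS {n m : ℕ} (𝒳 : Set (Fin n → ℝ)) (S : Set (Fin m → ℝ))
    (f : (Fin n → ℝ) → (Fin m → ℝ) → Fin n → ℝ)
    (X : Set (Fin n → ℝ)) : Set (Fin n → ℝ) :=
  {x | x ∈ 𝒳 ∧ ∃ u ∈ S, f x u ∈ X}

/-- Under-sampled predecessor inclusion: if `f` is ρ-Lipschitz and `𝒰_μ ⊆ 𝒰` is a
μ-net of `𝒰`, then for compact `Y ⊆ 𝒳`, `Pre_𝒰(Y ⊖ B_{ρμ}) ⊆ Pre_{𝒰_μ}(Y)`. -/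
theorem undersampled_pre_subset {n m : ℕ}
    (𝒳 : Set (Fin n → ℝ)) (𝒰 𝒰μ : Set (Fin m → ℝ))
    (h𝒳 : IsCompact 𝒳) (h𝒰 : IsCompact 𝒰)
    (f : (Fin n → ℝ) → (Fin m → ℝ) → Fin n → ℝ)
    (ρ μ : ℝ) (hρ : 0 < ρ) (hμ : 0 < μ)
    (hLip : ∀ (x y : Fin n → ℝ) (u v : Fin m → ℝ),
      ‖f x u - f y v‖ ≤ ρ * (‖x - y‖ + ‖u - v‖))
    (hsub : 𝒰μ ⊆ 𝒰)
    (hnet : ∀ u ∈ 𝒰, ∃ u' ∈ 𝒰μ, ‖u - u'‖ ≤ μ)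
    (Y : Set (Fin n → ℝ)) (hY : IsCompact Y) (hY𝒳 : Y ⊆ 𝒳) :
    PreS 𝒳 𝒰 f (pdiff Y (ballInf (ρ * μ))) ⊆ PreS 𝒳 𝒰μ f Y := by
  rintro x ⟨hx, u, hu, hfu⟩
  obtain ⟨u', hu', hdist⟩ := hnet u hu
  refine ⟨hx, u', hu', ?_⟩
  have hb : f x u' - f x u ∈ ballInf (ρ * μ) := by
    have := hLip x x u' u
    simp only [sub_self, norm_zero, zero_add] at this
    have : ‖f x u' - f x u‖ ≤ ρ * μ := by
      calc ‖f x u' - f x u‖ ≤ ρ * ‖u' - u‖ := this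
        _ ≤ ρ * μ := by
            rw [← norm_neg, neg_sub] at hdist
            exact mul_le_mul_of_nonneg_left hdist hρ.le
    exact this
  have := hfu _ hb
  simpa using this
end
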